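/- Let T be a conjugate partial-symmetric tensor of order 2d ≥ 4 and dimension n. Then the infimum of ‖T − X‖ over all CPS tensors X with rank_cps(X) = 1 equals the infimum of ‖T − X‖ over all PS tensors X with rank_ps(X) = 1, and both are greater than or equal to the infimum of ‖T − X‖ over all complex tensors X with rank(X) = 1. -/
import Mathlib


open scoped BigOperators
open ComplexConjugate

/-- Partial-symmetric tensor of order `2d`, dimension `n` (two-block index form). -/
def IsPS {n d : ℕ} (T : (Fin d → Fin n) → (Fin d → Fin n) → ℂ) : Prop :=
  ∀ (σ τ : Equiv.Perm (Fin d)) (i j : Fin d → Fin n), T (i ∘ σ) (j ∘ τ) = T i j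

/-- Conjugate partial-symmetric tensor. -/
def IsCPS {n d : ℕ} (T : (Fin d → Fin n) → (Fin d → Fin n) → ℂ) : Prop :=
  IsPS T ∧ ∀ i j, T i j = conj (T j i)

/-- The rank of `T`. -/
noncomputable def tRank {n d : ℕ} (T : (Fin d → Fin n) → (Fin d → Fin n) → ℂ) : ℕ :=
  sInf {r : ℕ | ∃ a b : Fin r → Fin d → Fin n → ℂ,
    ∀ i j, T i j = ∑ s, (∏ k, a s k (i k)) * ∏ k, b s k (j k)}

/-- The PS rank of `T`. -/
noncomputable def psRank {n d : ℕ} (T : (Fin d → Fin n) → (Fin d → Fin n) → ℂ) : ℕ :=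
  sInf {r : ℕ | ∃ (lam : Fin r → ℂ) (a : Fin r → Fin n → ℂ),
    ∀ i j, T i j = ∑ s, lam s * ((∏ k, conj (a s (i k))) * ∏ k, a s (j k))}

/-- The CPS rank of `T`. -/
noncomputable def cpsRank {n d : ℕ} (T : (Fin d → Fin n) → (Fin d → Fin n) → ℂ) : ℕ :=
  sInf {r : ℕ | ∃ (lam : Fin r → ℝ) (a : Fin r → Fin n → ℂ),
    ∀ i j, T i j = ∑ s, (lam s : ℂ) * ((∏ k, conj (a s (i k))) * ∏ k, a s (j k))}

/-- The Frobenius norm of a tensor. -/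
noncomputable def frobNorm {n d : ℕ} (T : (Fin d → Fin n) → (Fin d → Fin n) → ℂ) : ℝ :=
  Real.sqrt (∑ i : Fin d → Fin n, ∑ j : Fin d → Fin n, Complex.normSq (T i j))

/-- For a CPS tensor `T` of order `2d ≥ 4`: the best rank-one CPS approximation error
equals the best rank-one PS approximation error, and both are at least the best
rank-one complex approximation error. -/
lemma natInf_eq_one' {S : Set ℕ} (h1 : 1 ∈ S) (h0 : 0 ∉ S) : sInf S = 1 := by
  have hle := Nat.sInf_le h1
  have hne : sInf S ≠ 0 := by
    intro hz
    rcases Nat.sInf_eq_zero.mp hz with h | h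
    · exact h0 h
    · rw [h] at h1; exact h1
  omega

lemma natInf_one_mem' {S : Set ℕ} (h : sInf S = 1) : 1 ∈ S ∧ 0 ∉ S := by
  have hne : S.Nonempty := by
    by_contra hc
    rw [Set.not_nonempty_iff_eq_empty] at hc
    simp [hc, Nat.sInf_empty] at h
  constructor
  · have := Nat.sInf_mem hne
    rwa [h] at this
  · intro h0
    have := Nat.sInf_le h0
    omega

lemma frobNorm_nonneg' {n d : ℕ} (T : (Fin d → Fin n) → (Fin d → Fin n) → ℂ) :
    0 ≤ frobNorm T := Real.sqrt_nonneg _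

/-- Pythagorean inequality: projecting onto the Hermitian part decreases distance
to a Hermitian tensor. -/
lemma pyth' {n d : ℕ} (T X : (Fin d → Fin n) → (Fin d → Fin n) → ℂ)
    (hT : ∀ i j, T i j = conj (T j i)) :
    frobNorm (fun i j => T i j - (X i j + conj (X j i)) / 2)
      ≤ frobNorm (fun i j => T i j - X i j) := by
  set u : (Fin d → Fin n) → (Fin d → Fin n) → ℂ :=
    fun i j => T i j - (X i j + conj (X j i)) / 2 with hu_def
  set A : (Fin d → Fin n) → (Fin d → Fin n) → ℂ :=
    fun i j => (X i j - conj (X j i)) / 2 with hA_def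
  have hXu : ∀ i j, T i j - X i j = u i j - A i j := by
    intro i j; simp only [hu_def, hA_def]; ring
  have hu : ∀ i j, u j i = conj (u i j) := by
    intro i j
    simp only [hu_def, map_sub, map_div₀, map_add, Complex.conj_conj, map_ofNat]
    rw [← hT j i]
    ring
  have hA : ∀ i j, conj (A j i) = - A i j := by
    intro i j
    simp only [hA_def, map_sub, map_div₀, Complex.conj_conj, map_ofNat]
    ring
  set S : ℂ := ∑ i : Fin d → Fin n, ∑ j : Fin d → Fin n, u i j * conj (A i j) with hS_def
  have hconjS : conj S = ∑ i : Fin d → Fin n, ∑ j : Fin d → Fin n, conj (u i j) * A i j := by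
    rw [hS_def]
    simp only [map_sum, map_mul, Complex.conj_conj]
  have hS : S = - conj S := by
    calc S = ∑ j : Fin d → Fin n, ∑ i : Fin d → Fin n, u i j * conj (A i j) := Finset.sum_comm
    _ = ∑ i : Fin d → Fin n, ∑ j : Fin d → Fin n, u j i * conj (A j i) := rfl
    _ = ∑ i : Fin d → Fin n, ∑ j : Fin d → Fin n, conj (u i j) * (- A i j) := by
        refine Finset.sum_congr rfl fun i _ => Finset.sum_congr rfl fun j _ => ?_
        rw [hu i j, hA i j]
    _ = - conj S := by
        rw [hconjS]; simp [mul_neg, Finset.sum_neg_distrib]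
  have hre : S.re = 0 := by
    have := congrArg Complex.re hS
    simp only [Complex.neg_re, Complex.conj_re] at this
    linarith
  unfold frobNorm
  apply Real.sqrt_le_sqrt
  have expand : ∀ i j : Fin d → Fin n, Complex.normSq (T i j - X i j)
      = Complex.normSq (u i j) + Complex.normSq (A i j) - 2 * (u i j * conj (A i j)).re := by
    intro i j; rw [hXu]; exact Complex.normSq_sub _ _
  have hAnn : 0 ≤ ∑ i : Fin d → Fin n, ∑ j : Fin d → Fin n, Complex.normSq (A i j) :=
    Finset.sum_nonneg fun i _ => Finset.sum_nonneg fun j _ => Complex.normSq_nonneg _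
  have hre2 : (∑ i : Fin d → Fin n, ∑ j : Fin d → Fin n, (u i j * conj (A i j)).re) = 0 := by
    rw [show (∑ i : Fin d → Fin n, ∑ j : Fin d → Fin n, (u i j * conj (A i j)).re) = S.re by
      simp [hS_def, Complex.re_sum], hre]
  have key : (∑ i : Fin d → Fin n, ∑ j : Fin d → Fin n, Complex.normSq (T i j - X i j))
      = (∑ i : Fin d → Fin n, ∑ j : Fin d → Fin n, Complex.normSq (u i j))
        + (∑ i : Fin d → Fin n, ∑ j : Fin d → Fin n, Complex.normSq (A i j))
        - 2 * (∑ i : Fin d → Fin n, ∑ j : Fin d → Fin n, (u i j * conj (A i j)).re) := by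
    simp_rw [expand]
    simp only [Finset.sum_sub_distrib, Finset.sum_add_distrib, ← Finset.mul_sum]
  rw [key, hre2]
  linarith

/-- The elementary conjugate-symmetric rank-one tensor built from a vector. -/
def cTens {n d : ℕ} (a0 : Fin n → ℂ) : (Fin d → Fin n) → (Fin d → Fin n) → ℂ :=
  fun i j => (∏ k, conj (a0 (i k))) * ∏ k, a0 (j k)

lemma conj_cTens {n d : ℕ} (a0 : Fin n → ℂ) (i j : Fin d → Fin n) :
    conj (cTens a0 j i) = cTens a0 i j := by
  simp only [cTens, map_mul, map_prod, Complex.conj_conj]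
  rw [mul_comm]

lemma cTens_perm {n d : ℕ} (a0 : Fin n → ℂ) (σ τ : Equiv.Perm (Fin d))
    (i j : Fin d → Fin n) : cTens a0 (i ∘ σ) (j ∘ τ) = cTens a0 i j := by
  simp only [cTens, Function.comp]
  rw [Equiv.prod_comp σ (fun k => conj (a0 (i k))), Equiv.prod_comp τ (fun k => a0 (j k))]

lemma cps_props {n d : ℕ} (μ : ℝ) (hμ : μ ≠ 0) (a0 : Fin n → ℂ)
    (hne : ∃ i j : Fin d → Fin n, cTens a0 i j ≠ 0) :
    IsCPS (fun i j : Fin d → Fin n => (μ : ℂ) * cTens a0 i j) ∧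
      cpsRank (fun i j : Fin d → Fin n => (μ : ℂ) * cTens a0 i j) = 1 := by
  obtain ⟨i0, j0, hc⟩ := hne
  constructor
  · constructor
    · intro σ τ i j
      simp only [cTens_perm]
    · intro i j
      rw [map_mul, conj_cTens, Complex.conj_ofReal]
  · unfold cpsRank
    apply natInf_eq_one'
    · refine ⟨fun _ => μ, fun _ => a0, fun i j => ?_⟩
      simp [Fin.sum_univ_one, cTens]
    · rintro ⟨lam, a, h⟩
      have := h i0 j0
      simp only [Finset.univ_eq_empty, Finset.sum_empty] at this
      exact (mul_ne_zero (by exact_mod_cast Complex.ofReal_ne_zero.mpr hμ) hc) this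

theorem stmt11 {n d : ℕ} (hd : 2 ≤ d) (T : (Fin d → Fin n) → (Fin d → Fin n) → ℂ)
    (hT : IsCPS T) :
    sInf {v : ℝ | ∃ X : (Fin d → Fin n) → (Fin d → Fin n) → ℂ,
        IsCPS X ∧ cpsRank X = 1 ∧ v = frobNorm (fun i j => T i j - X i j)}
      = sInf {v : ℝ | ∃ X : (Fin d → Fin n) → (Fin d → Fin n) → ℂ,
        IsPS X ∧ psRank X = 1 ∧ v = frobNorm (fun i j => T i j - X i j)} ∧
    sInf {v : ℝ | ∃ X : (Fin d → Fin n) → (Fin d → Fin n) → ℂ,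
        tRank X = 1 ∧ v = frobNorm (fun i j => T i j - X i j)}
      ≤ sInf {v : ℝ | ∃ X : (Fin d → Fin n) → (Fin d → Fin n) → ℂ,
        IsCPS X ∧ cpsRank X = 1 ∧ v = frobNorm (fun i j => T i j - X i j)} := by
  by_cases hn : n = 0
  · -- degenerate case: index type is empty, all ranks are 0, all sets empty
    subst hn
    have hI : ∀ i : Fin d → Fin 0, False := fun i => (i ⟨0, by omega⟩).elim0
    have hc : ∀ X : (Fin d → Fin 0) → (Fin d → Fin 0) → ℂ, cpsRank X = 0 := fun X =>
      Nat.sInf_eq_zero.mpr (Or.inl ⟨Fin.elim0, Fin.elim0, fun i _ => absurd (hI i) not_false⟩)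
    have hp : ∀ X : (Fin d → Fin 0) → (Fin d → Fin 0) → ℂ, psRank X = 0 := fun X =>
      Nat.sInf_eq_zero.mpr (Or.inl ⟨Fin.elim0, Fin.elim0, fun i _ => absurd (hI i) not_false⟩)
    have ht : ∀ X : (Fin d → Fin 0) → (Fin d → Fin 0) → ℂ, tRank X = 0 := fun X =>
      Nat.sInf_eq_zero.mpr (Or.inl ⟨Fin.elim0, Fin.elim0, fun i _ => absurd (hI i) not_false⟩)
    have e1 : {v : ℝ | ∃ X : (Fin d → Fin 0) → (Fin d → Fin 0) → ℂ,
        IsCPS X ∧ cpsRank X = 1 ∧ v = frobNorm (fun i j => T i j - X i j)} = ∅ := by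
      ext v; simp only [Set.mem_setOf_eq, Set.mem_empty_iff_false, iff_false]
      rintro ⟨X, _, h1, _⟩; rw [hc X] at h1; exact absurd h1 (by norm_num)
    have e2 : {v : ℝ | ∃ X : (Fin d → Fin 0) → (Fin d → Fin 0) → ℂ,
        IsPS X ∧ psRank X = 1 ∧ v = frobNorm (fun i j => T i j - X i j)} = ∅ := by
      ext v; simp only [Set.mem_setOf_eq, Set.mem_empty_iff_false, iff_false]
      rintro ⟨X, _, h1, _⟩; rw [hp X] at h1; exact absurd h1 (by norm_num)
    have e3 : {v : ℝ | ∃ X : (Fin d → Fin 0) → (Fin d → Fin 0) → ℂ,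
        tRank X = 1 ∧ v = frobNorm (fun i j => T i j - X i j)} = ∅ := by
      ext v; simp only [Set.mem_setOf_eq, Set.mem_empty_iff_false, iff_false]
      rintro ⟨X, h1, _⟩; rw [ht X] at h1; exact absurd h1 (by norm_num)
    rw [e1, e2, e3]
    exact ⟨rfl, le_refl _⟩
  · have hn1 : 1 ≤ n := Nat.one_le_iff_ne_zero.mpr hn
    set Sc := {v : ℝ | ∃ X : (Fin d → Fin n) → (Fin d → Fin n) → ℂ,
        IsCPS X ∧ cpsRank X = 1 ∧ v = frobNorm (fun i j => T i j - X i j)} with hSc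
    set Sp := {v : ℝ | ∃ X : (Fin d → Fin n) → (Fin d → Fin n) → ℂ,
        IsPS X ∧ psRank X = 1 ∧ v = frobNorm (fun i j => T i j - X i j)} with hSp
    set St := {v : ℝ | ∃ X : (Fin d → Fin n) → (Fin d → Fin n) → ℂ,
        tRank X = 1 ∧ v = frobNorm (fun i j => T i j - X i j)} with hSt
    have bddSc : BddBelow Sc := ⟨0, by rintro v ⟨X, _, _, rfl⟩; exact frobNorm_nonneg' _⟩
    have bddSp : BddBelow Sp := ⟨0, by rintro v ⟨X, _, _, rfl⟩; exact frobNorm_nonneg' _⟩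
    have bddSt : BddBelow St := ⟨0, by rintro v ⟨X, _, rfl⟩; exact frobNorm_nonneg' _⟩
    -- nonemptiness of Sc
    have hcne1 : ∃ i j : Fin d → Fin n, cTens (fun _ => (1 : ℂ)) i j ≠ 0 := by
      refine ⟨fun _ => ⟨0, by omega⟩, fun _ => ⟨0, by omega⟩, ?_⟩
      simp [cTens]
    have hnc : Sc.Nonempty := by
      obtain ⟨h1, h2⟩ := cps_props (1 : ℝ) one_ne_zero (fun _ => (1 : ℂ)) hcne1
      exact ⟨_, ⟨_, h1, h2, rfl⟩⟩
    -- Sc ⊆ Sp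
    have hsub_cp : Sc ⊆ Sp := by
      rintro v ⟨X, hX, hr, rfl⟩
      obtain ⟨⟨lam, a, hrep⟩, h0⟩ := natInf_one_mem' hr
      refine ⟨X, hX.1, ?_, rfl⟩
      apply natInf_eq_one'
      · exact ⟨fun s => (lam s : ℂ), a, hrep⟩
      · rintro ⟨lam0, a0, h0rep⟩
        exact h0 ⟨Fin.elim0, Fin.elim0, fun i j => by simpa using h0rep i j⟩
    -- Sc ⊆ St
    have hsub_ct : Sc ⊆ St := by
      rintro v ⟨X, hX, hr, rfl⟩
      obtain ⟨⟨lam, a, hrep⟩, h0⟩ := natInf_one_mem' hr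
      haveI : NeZero d := ⟨by omega⟩
      refine ⟨X, ?_, rfl⟩
      apply natInf_eq_one'
      · refine ⟨fun _ k x => (if k = 0 then ((lam 0 : ℂ)) else 1) * conj (a 0 x),
          fun _ _ x => a 0 x, fun i j => ?_⟩
        rw [hrep i j]
        simp only [Fin.sum_univ_one, Finset.prod_mul_distrib, Finset.prod_ite_eq',
          Finset.mem_univ, if_true]
        ring
      · rintro ⟨A, B, h0rep⟩
        exact h0 ⟨Fin.elim0, Fin.elim0, fun i j => by simpa using h0rep i j⟩
    -- key inequality: sInf Sc ≤ v for every v ∈ Sp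
    have hB : ∀ v ∈ Sp, sInf Sc ≤ v := by
      rintro v ⟨X, hXps, hr, rfl⟩
      obtain ⟨⟨lam, a, hrep⟩, h0⟩ := natInf_one_mem' hr
      set L0 : ℂ := lam 0 with hL0
      set a0 : Fin n → ℂ := a 0 with ha0
      have hX : ∀ i j, X i j = L0 * cTens a0 i j := by
        intro i j
        simpa [cTens, Fin.sum_univ_one] using hrep i j
      have hXne : ∃ i j, X i j ≠ 0 := by
        by_contra hc
        push_neg at hc
        exact h0 ⟨Fin.elim0, Fin.elim0, fun i j => by simpa using hc i j⟩
      obtain ⟨i0, j0, hij⟩ := hXne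
      have hcne : cTens a0 i0 j0 ≠ 0 := fun h => hij (by rw [hX, h, mul_zero])
      have hpy := pyth' T X hT.2
      have hHerm : (fun i j => T i j - (X i j + conj (X j i)) / 2)
          = fun i j => T i j - (L0.re : ℂ) * cTens a0 i j := by
        funext i j
        rw [hX i j, hX j i, map_mul, conj_cTens]
        have h2 : L0 * cTens a0 i j + conj L0 * cTens a0 i j
            = ((2 * L0.re : ℝ) : ℂ) * cTens a0 i j := by
          rw [← add_mul, Complex.add_conj]
        rw [h2]
        push_cast
        ring
      rw [hHerm] at hpy
      by_cases hre : L0.re = 0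
      · have h1 : frobNorm T ≤ frobNorm (fun i j => T i j - X i j) := by
          have he : (fun i j : Fin d → Fin n => T i j - (L0.re : ℂ) * cTens a0 i j) = T := by
            funext i j; rw [hre]; simp
          rwa [he] at hpy
        have hmem : ∀ ε : ℝ, ε ≠ 0 →
            sInf Sc ≤ frobNorm (fun i j => T i j - (ε : ℂ) * cTens a0 i j) := by
          intro ε hε
          obtain ⟨hc1, hc2⟩ := cps_props ε hε a0 ⟨i0, j0, hcne⟩
          refine csInf_le bddSc ⟨fun i j => (ε : ℂ) * cTens a0 i j, hc1, hc2, ?_⟩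
          simp only [frobNorm]
        have hg : Continuous (fun ε : ℝ =>
            frobNorm (fun i j => T i j - (ε : ℂ) * cTens a0 i j)) := by
          unfold frobNorm
          apply Real.continuous_sqrt.comp
          apply continuous_finset_sum
          intro i _
          apply continuous_finset_sum
          intro j _
          exact Complex.continuous_normSq.comp
            (continuous_const.sub (Complex.continuous_ofReal.mul continuous_const))
        have htend : Filter.Tendsto (fun ε : ℝ =>
            frobNorm (fun i j => T i j - (ε : ℂ) * cTens a0 i j))
            (nhdsWithin 0 (Set.Ioi 0)) (nhds (frobNorm T)) := by
          have h00 : frobNorm (fun i j : Fin d → Fin n => T i j - ((0 : ℝ) : ℂ) * cTens a0 i j)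
              = frobNorm T := by norm_num
          rw [← h00]
          exact (hg.continuousAt.continuousWithinAt).tendsto
        have h2 : sInf Sc ≤ frobNorm T :=
          ge_of_tendsto htend
            (eventually_nhdsWithin_of_forall fun x hx => hmem x (ne_of_gt hx))
        exact h2.trans h1
      · obtain ⟨hcps, hrank⟩ := cps_props L0.re hre a0 ⟨i0, j0, hcne⟩
        exact le_trans (csInf_le bddSc ⟨fun i j => ((L0.re : ℝ) : ℂ) * cTens a0 i j,
          hcps, hrank, rfl⟩) hpy
    constructor
    · apply le_antisymm
      · exact le_csInf (hnc.mono hsub_cp) hB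
      · exact csInf_le_csInf bddSp hnc hsub_cp
    · exact csInf_le_csInf bddSt hnc hsub_ct
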